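/- (One-step version of Lemma 6 / equation (way) of the paper, strongly convex case.) In the stochastic SMBA setting described below with X* = {x*}, let β ∈ (0,1), μ > 0, let x ∈ Y, set w = Π_X(x), let α ≥ 0, let g ∈ ℝⁿ satisfy f(y) ≥ f(x) + ⟨g, y − x⟩ + (μ/2)‖y − x‖² for all y ∈ Y with ‖g‖ ≤ B_f, let ḡ ∈ ℝⁿ satisfy f(y) ≥ f(w) + ⟨ḡ, y − w⟩ for all y ∈ Y with ‖ḡ‖ ≤ B̄_f, and assume the quadratic growth property f(y) − f(x*) ≥ (μ/2)‖y − x*‖² for all y ∈ X. Set v = Π_Y(x − α·g) and Ĉ = (2c𝓑²/(β(1 − β)))·B̄_f² + (1 + 2β(1 − β)/(c𝓑²))·B_f². Then ∫_Ω ‖x⁺(ξ) − x*‖² dP(ξ) ≤ (1 − μα)‖x − x*‖² − μα·‖w − x*‖² − (β(1 − β)/(2c𝓑²))·dist²(x, X) + Ĉ·α². -/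

import Mathlib

open Metric MeasureTheory
open scoped RealInnerProductSpace

/-- The center of the ball associated with the quadratic upper approximation
of `h` at `v` with parameter `L`: `c_v = v - (1/L) ∇h(v)`. -/
noncomputable def ballCenter {n : ℕ} (h : EuclideanSpace ℝ (Fin n) → ℝ) (L : ℝ)
    (v : EuclideanSpace ℝ (Fin n)) : EuclideanSpace ℝ (Fin n) :=
  v - (1 / L) • gradient h v

/-- The radius term `R_v = ‖∇h(v)‖²/L² - 2 h(v)/L`. -/
noncomputable def ballRadius {n : ℕ} (h : EuclideanSpace ℝ (Fin n) → ℝ) (L : ℝ)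
    (v : EuclideanSpace ℝ (Fin n)) : ℝ :=
  ‖gradient h v‖ ^ 2 / L ^ 2 - 2 * h v / L

/-- The adaptive parameter `p_v = ((h(v))₊ L) / (1 - √((R_v)₊)/‖v - c_v‖)`,
where division by zero is interpreted as zero (Lean's convention). -/
noncomputable def adaptP {n : ℕ} (h : EuclideanSpace ℝ (Fin n) → ℝ) (L : ℝ)
    (v : EuclideanSpace ℝ (Fin n)) : ℝ :=
  max (h v) 0 * L /
    (1 - Real.sqrt (max (ballRadius h L v) 0) / ‖v - ballCenter h L v‖)

lemma proj_nonexpansive {n : ℕ} {Y : Set (EuclideanSpace ℝ (Fin n))}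
    (hYcv : Convex ℝ Y) {z p u : EuclideanSpace ℝ (Fin n)}
    (hp : p ∈ Y) (hu : u ∈ Y) (hproj : ∀ y ∈ Y, ‖z - p‖ ≤ ‖z - y‖) :
    ‖p - u‖ ≤ ‖z - u‖ := by
  have key : ⟪z - p, u - p⟫ ≤ 0 := by
    by_contra hcon
    push_neg at hcon
    have hup : u ≠ p := by
      intro hupe; rw [hupe] at hcon; simp at hcon
    have hnorm : 0 < ‖u - p‖ ^ 2 :=
      pow_pos (norm_pos_iff.2 (sub_ne_zero.2 hup)) 2
    set s := ⟪z - p, u - p⟫ with hs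
    set t : ℝ := min 1 (s / ‖u - p‖ ^ 2) with htdef
    have ht0 : 0 < t := lt_min one_pos (div_pos hcon hnorm)
    have ht1 : t ≤ 1 := min_le_left _ _
    have hmem : p + t • (u - p) ∈ Y := by
      have h2 := hYcv hp hu (by linarith : (0:ℝ) ≤ 1 - t) (le_of_lt ht0) (by ring)
      have : (1 - t) • p + t • u = p + t • (u - p) := by
        rw [smul_sub, sub_smul, one_smul]; abel
      rwa [this] at h2
    have h1 := hproj _ hmem
    have h2 : ‖z - (p + t • (u - p))‖ ^ 2
        = ‖z - p‖ ^ 2 - 2 * (t * s) + t ^ 2 * ‖u - p‖ ^ 2 := by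
      have he : z - (p + t • (u - p)) = (z - p) - t • (u - p) := by abel
      rw [he, norm_sub_sq_real, real_inner_smul_right, norm_smul,
        Real.norm_eq_abs, mul_pow, sq_abs]
      try ring
    have h3 : ‖z - p‖ ^ 2 ≤ ‖z - (p + t • (u - p))‖ ^ 2 :=
      pow_le_pow_left₀ (norm_nonneg _) h1 2
    have h4 : 2 * (t * s) ≤ t ^ 2 * ‖u - p‖ ^ 2 := by linarith [h2 ▸ h3]
    have h5 : t * ‖u - p‖ ^ 2 ≤ s := by
      have hle : t ≤ s / ‖u - p‖ ^ 2 := min_le_right _ _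
      calc t * ‖u - p‖ ^ 2 ≤ (s / ‖u - p‖ ^ 2) * ‖u - p‖ ^ 2 :=
            mul_le_mul_of_nonneg_right hle hnorm.le
        _ = s := div_mul_cancel₀ _ (ne_of_gt hnorm)
    nlinarith [mul_le_mul_of_nonneg_left h5 ht0.le]
  have hsq : ‖p - u‖ ^ 2 ≤ ‖z - u‖ ^ 2 := by
    have hzu : z - u = (z - p) - (u - p) := by abel
    have hexp := norm_sub_sq_real (z - p) (u - p)
    rw [← hzu] at hexp
    have hn : ‖p - u‖ = ‖u - p‖ := norm_sub_rev _ _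
    rw [hn, hexp]
    nlinarith [key, sq_nonneg ‖z - p‖]
  nlinarith [hsq, norm_nonneg (p - u), norm_nonneg (z - u)]

lemma grad_ineq {n : ℕ} (φ : EuclideanSpace ℝ (Fin n) → ℝ)
    (hc : ConvexOn ℝ Set.univ φ) (hd : Differentiable ℝ φ)
    (a b : EuclideanSpace ℝ (Fin n)) :
    φ a + ⟪gradient φ a, b - a⟫ ≤ φ b := by
  have hline : HasDerivAt (fun s : ℝ => a + s • (b - a)) (b - a) 0 := by
    have h1 : HasDerivAt (fun s : ℝ => s • (b - a)) ((1:ℝ) • (b - a)) 0 :=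
      (hasDerivAt_id 0).smul_const (b - a)
    simpa using h1.const_add a
  have hgrad : HasFDerivAt φ (InnerProductSpace.toDual ℝ _ (gradient φ a))
      ((fun s : ℝ => a + s • (b - a)) 0) := by
    simpa using (hd a).hasGradientAt.hasFDerivAt
  have hψ : HasDerivAt (fun t : ℝ => φ (a + t • (b - a)))
      ⟪gradient φ a, b - a⟫ 0 := by
    have h2 := hgrad.comp_hasDerivAt 0 hline
    simpa [InnerProductSpace.toDual_apply_apply, Function.comp_def] using h2
  have h3 : Filter.Tendsto (slope (fun t : ℝ => φ (a + t • (b - a))) 0)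
      (nhdsWithin 0 (Set.Ioi 0)) (nhds ⟪gradient φ a, b - a⟫) :=
    (hasDerivAt_iff_tendsto_slope.1 hψ).mono_left
      (nhdsWithin_mono 0 (fun t ht => ne_of_gt ht))
  have hle : ⟪gradient φ a, b - a⟫ ≤ φ b - φ a := by
    refine le_of_tendsto h3 ?_
    filter_upwards [Ioc_mem_nhdsGT_of_mem (Set.left_mem_Ico.2 one_pos)] with t ht
    have hcv := hc.2 (Set.mem_univ a) (Set.mem_univ b)
      (by linarith [ht.2] : (0:ℝ) ≤ 1 - t) (le_of_lt ht.1) (by ring)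
    have hpt : a + t • (b - a) = (1 - t) • a + t • b := by
      rw [smul_sub, sub_smul, one_smul]; abel
    rw [slope_def_field]
    simp only [zero_smul, add_zero, sub_zero, smul_eq_mul] at hcv ⊢
    rw [hpt, div_le_iff₀ ht.1]
    nlinarith [hcv]
  linarith


lemma aux_R_nonpos {RR Lp G H : ℝ} (hRLp : RR * Lp ^ 2 = G ^ 2 - 2 * H * Lp)
    (hR0 : RR ≤ 0) : G ^ 2 ≤ 2 * H * Lp := by
  nlinarith [sq_nonneg Lp]

lemma aux_key1 {d r Lp G H : ℝ} (hdG2 : d * G ^ 2 = G ^ 2 - r * Lp * G)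
    (h6 : (r * Lp) ^ 2 = G ^ 2 - 2 * H * Lp) (h1 : 0 ≤ r * Lp) (h2 : r * Lp ≤ G) :
    d * G ^ 2 ≤ 2 * H * Lp := by
  nlinarith [mul_nonneg h1 (sub_nonneg.2 h2)]

lemma aux_key2 {d r Lp G H B2 : ℝ} (hdG2 : d * G ^ 2 = G ^ 2 - r * Lp * G)
    (h6 : (r * Lp) ^ 2 = G ^ 2 - 2 * H * Lp) (hd : 0 ≤ d) (hGB : G ^ 2 ≤ B2) :
    H * Lp ≤ d * B2 := by
  have h8 : H * Lp ≤ d * G ^ 2 := by nlinarith [sq_nonneg (G - r * Lp)]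
  have h9 := mul_le_mul_of_nonneg_left hGB hd
  linarith

lemma aux_zb {V2 IP G2 H β τ B2 : ℝ} (hβ0 : 0 < β) (hβ1 : β < 1) (hτ : 0 < τ)
    (hB2 : 0 < B2) (hip : H ≤ IP) (hτG : τ * G2 ≤ 2 * H) (hτH : H ^ 2 / B2 ≤ τ * H) :
    V2 - 2 * (β * τ) * IP + (β * τ) ^ 2 * G2 ≤ V2 - 2 * β * (1 - β) / B2 * H ^ 2 := by
  have hβ1' : (0:ℝ) < 1 - β := by linarith
  have e1 : (β * τ) ^ 2 * G2 ≤ β ^ 2 * τ * (2 * H) := by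
    nlinarith [mul_le_mul_of_nonneg_left hτG (mul_nonneg (sq_nonneg β) hτ.le)]
  have e2 : 2 * (β * τ) * H ≤ 2 * (β * τ) * IP :=
    mul_le_mul_of_nonneg_left hip (by nlinarith [mul_pos hβ0 hτ])
  have e4 : 2 * β * (1 - β) * (H ^ 2 / B2) ≤ 2 * β * (1 - β) * (τ * H) :=
    mul_le_mul_of_nonneg_left hτH (by nlinarith [mul_pos hβ0 hβ1'])
  have e5 : 2 * β * (1 - β) / B2 * H ^ 2 = 2 * β * (1 - β) * (H ^ 2 / B2) := by ring
  linarith [e1, e2, e4, e5]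

lemma aux_Ev {D a Ev : ℝ} (hD : 0 ≤ D) (ha : 0 ≤ a) (hEv : 0 ≤ Ev)
    (h : D - a ≤ Ev) : D ^ 2 / 2 - a ^ 2 ≤ Ev ^ 2 := by
  rcases le_or_gt D a with hcase | hcase
  · nlinarith [sq_nonneg Ev, mul_self_le_mul_self hD hcase]
  · nlinarith [mul_self_le_mul_self (by linarith : (0:ℝ) ≤ D - a) h,
      sq_nonneg (D - 2 * a)]

set_option maxHeartbeats 4000000 in
theorem stmt_17 {n : ℕ} {Ω : Type*} [MeasurableSpace Ω]
    (P : Measure Ω) [IsProbabilityMeasure P]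
    (h : EuclideanSpace ℝ (Fin n) → Ω → ℝ)
    (hconv : ∀ ξ, ConvexOn ℝ Set.univ (fun y => h y ξ))
    (hdiff : ∀ ξ, Differentiable ℝ (fun y => h y ξ))
    (L : Ω → ℝ) (Lmax : ℝ) (hLpos : ∀ ξ, 0 < L ξ) (hLmax : ∀ ξ, L ξ ≤ Lmax)
    (hLip : ∀ ξ x y, ‖gradient (fun u => h u ξ) x - gradient (fun u => h u ξ) y‖
        ≤ L ξ * ‖x - y‖)
    (Y : Set (EuclideanSpace ℝ (Fin n)))
    (hYne : Y.Nonempty) (hYcl : IsClosed Y) (hYcv : Convex ℝ Y)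
    (X : Set (EuclideanSpace ℝ (Fin n)))
    (hX : X = {y ∈ Y | ∀ ξ, h y ξ ≤ 0}) (hXne : X.Nonempty)
    -- `X* = {x*}` where `x*` minimizes `f` over `X`
    (f : EuclideanSpace ℝ (Fin n) → ℝ)
    (xstar : EuclideanSpace ℝ (Fin n)) (hxstarX : xstar ∈ X)
    (hxstarmin : ∀ y ∈ X, f xstar ≤ f y)
    -- linear regularity condition
    (c : ℝ) (hc : 0 < c)
    (hreg : ∀ y ∈ Y, (infDist y X) ^ 2 ≤ c * ∫ ξ, (max (h y ξ) 0) ^ 2 ∂P)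
    (β : ℝ) (hβ : β ∈ Set.Ioo (0 : ℝ) 1) (μ : ℝ) (hμ : 0 < μ)
    (x : EuclideanSpace ℝ (Fin n)) (hx : x ∈ Y)
    -- `w = Π_X(x)` : projection of `x` onto `X`
    (w : EuclideanSpace ℝ (Fin n)) (hwmem : w ∈ X)
    (hwproj : ∀ y ∈ X, ‖x - w‖ ≤ ‖x - y‖)
    (α : ℝ) (hα : 0 ≤ α)
    -- strong-convexity subgradient inequality at `x`
    (g : EuclideanSpace ℝ (Fin n))
    (hsg : ∀ y ∈ Y, f x + ⟪g, y - x⟫ + (μ / 2) * ‖y - x‖ ^ 2 ≤ f y)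
    (Bf : ℝ) (hg : ‖g‖ ≤ Bf)
    -- subgradient of `f` at `w`
    (gbar : EuclideanSpace ℝ (Fin n))
    (hsgbar : ∀ y ∈ Y, f w + ⟪gbar, y - w⟫ ≤ f y)
    (Bbarf : ℝ) (hgbar : ‖gbar‖ ≤ Bbarf)
    -- quadratic growth property
    (hQG : ∀ y ∈ X, (μ / 2) * ‖y - xstar‖ ^ 2 ≤ f y - f xstar)
    -- `v = Π_Y(x - α g)` : projection of `x - α g` onto `Y`
    (v : EuclideanSpace ℝ (Fin n)) (hvY : v ∈ Y)
    (hvproj : ∀ y ∈ Y, ‖x - α • g - v‖ ≤ ‖x - α • g - y‖)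
    -- bounds at the point `v`
    (Bh Mh : ℝ) (hBh : 0 < Bh) (hMh : 0 < Mh)
    (hgradbd : ∀ ξ, ‖gradient (fun u => h u ξ) v‖ ≤ Bh)
    (hhbd : ∀ ξ, |h v ξ| ≤ Mh)
    (B2 : ℝ) (hB2 : B2 = max (Bh ^ 2) (Mh * Lmax))
    (Chat : ℝ)
    (hChat : Chat = 2 * c * B2 / (β * (1 - β)) * Bbarf ^ 2
        + (1 + 2 * β * (1 - β) / (c * B2)) * Bf ^ 2)
    -- the SMBA feasibility step (division by zero interpreted as zero)
    (z : Ω → EuclideanSpace ℝ (Fin n))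
    (hz : ∀ ξ, z ξ = v - (β * (max (h v ξ) 0 / adaptP (fun u => h u ξ) (L ξ) v))
        • gradient (fun u => h u ξ) v)
    -- `xplus ξ = Π_Y(z ξ)` : projection of `z ξ` onto `Y`
    (xplus : Ω → EuclideanSpace ℝ (Fin n)) (hxpY : ∀ ξ, xplus ξ ∈ Y)
    (hxpproj : ∀ ξ, ∀ y ∈ Y, ‖z ξ - xplus ξ‖ ≤ ‖z ξ - y‖)
    -- measurability assumptions
    (hmeas1 : Measurable fun ξ => (max (h v ξ) 0) ^ 2)
    (hmeas2 : Measurable fun ξ => ‖xplus ξ - xstar‖ ^ 2) :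
    ∫ ξ, ‖xplus ξ - xstar‖ ^ 2 ∂P
      ≤ (1 - μ * α) * ‖x - xstar‖ ^ 2 - μ * α * ‖w - xstar‖ ^ 2
        - β * (1 - β) / (2 * c * B2) * (infDist x X) ^ 2 + Chat * α ^ 2 := by
  obtain ⟨hβ0, hβ1⟩ := hβ
  have hβ1' : (0:ℝ) < 1 - β := by linarith
  have hB2pos : 0 < B2 := by
    rw [hB2]; exact lt_of_lt_of_le (pow_pos hBh 2) (le_max_left _ _)
  have hxsX := hxstarX
  rw [hX] at hxsX
  have hxstarY : xstar ∈ Y := hxsX.1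
  have hhxstar : ∀ ξ, h xstar ξ ≤ 0 := hxsX.2
  have hBf0 : 0 ≤ Bf := le_trans (norm_nonneg g) hg
  have hBbarf0 : 0 ≤ Bbarf := le_trans (norm_nonneg gbar) hgbar
  set D := infDist x X with hDdef
  have hD0 : 0 ≤ D := infDist_nonneg
  set κ := β * (1 - β) / (c * B2) with hκdef
  have hκpos : 0 < κ := div_pos (mul_pos hβ0 hβ1') (mul_pos hc hB2pos)
  -- pointwise feasibility bound
  have hpoint : ∀ ξ, ‖xplus ξ - xstar‖ ^ 2
      ≤ ‖v - xstar‖ ^ 2 - 2 * β * (1 - β) / B2 * (max (h v ξ) 0) ^ 2 := by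
    intro ξ
    have hLp := hLpos ξ
    have hgi : h v ξ + ⟪gradient (fun u => h u ξ) v, xstar - v⟫ ≤ h xstar ξ :=
      grad_ineq (fun u => h u ξ) (hconv ξ) (hdiff ξ) v xstar
    have hgi' : h v ξ ≤ ⟪gradient (fun u => h u ξ) v, v - xstar⟫ := by
      have h0 := hhxstar ξ
      have hneg2 : ⟪gradient (fun u => h u ξ) v, xstar - v⟫
          = -⟪gradient (fun u => h u ξ) v, v - xstar⟫ := by
        rw [← inner_neg_right, neg_sub]
      rw [hneg2] at hgi
      linarith
    have hproj2 : ‖xplus ξ - xstar‖ ≤ ‖z ξ - xstar‖ :=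
      proj_nonexpansive hYcv (hxpY ξ) hxstarY (hxpproj ξ)
    rcases le_or_gt (h v ξ) 0 with hneg | hpos
    · have hmax : max (h v ξ) 0 = 0 := max_eq_right hneg
      have hzv : z ξ = v := by rw [hz ξ, hmax]; simp
      rw [hmax]
      rw [hzv] at hproj2
      have h2 := pow_le_pow_left₀ (norm_nonneg _) hproj2 2
      simpa using h2
    · -- positive case
      set G := gradient (fun u => h u ξ) v with hGdef
      have hGnorm : 0 < ‖G‖ := by
        rcases eq_or_ne G 0 with h0 | h0
        · exfalso; rw [h0] at hgi'; simp at hgi'; linarith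
        · exact norm_pos_iff.2 h0
      have hvc : v - ballCenter (fun u => h u ξ) (L ξ) v = (1 / L ξ) • G := by
        unfold ballCenter
        rw [← hGdef]
        exact sub_sub_cancel _ _
      have hvcn : ‖v - ballCenter (fun u => h u ξ) (L ξ) v‖ = ‖G‖ / L ξ := by
        rw [hvc, norm_smul, Real.norm_eq_abs, abs_of_pos (by positivity : (0:ℝ) < 1 / L ξ)]
        ring
      have hRval : ballRadius (fun u => h u ξ) (L ξ) v
          = ‖G‖ ^ 2 / (L ξ) ^ 2 - 2 * h v ξ / L ξ := by
        simp only [ballRadius, ← hGdef]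
      set R := ballRadius (fun u => h u ξ) (L ξ) v with hRdef
      set r := Real.sqrt (max R 0) with hrdef
      have hr0 : 0 ≤ r := Real.sqrt_nonneg _
      have hrLp : r * L ξ < ‖G‖ := by
        have h1 : max R 0 < (‖G‖ / L ξ) ^ 2 := by
          apply max_lt
          · rw [hRval, div_pow]
            have : 0 < 2 * h v ξ / L ξ := by positivity
            linarith
          · positivity
        have h2 : r < ‖G‖ / L ξ := by
          rw [hrdef]
          calc Real.sqrt (max R 0) < Real.sqrt ((‖G‖ / L ξ) ^ 2) :=
              Real.sqrt_lt_sqrt (le_max_right _ _) h1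
            _ = ‖G‖ / L ξ := Real.sqrt_sq (by positivity)
        exact (lt_div_iff₀ hLp).1 h2
      set d := 1 - r * L ξ / ‖G‖ with hddef
      have hdpos : 0 < d := by
        rw [hddef]
        have : r * L ξ / ‖G‖ < 1 := (div_lt_one hGnorm).2 hrLp
        linarith
      have hadapt : adaptP (fun u => h u ξ) (L ξ) v = h v ξ * L ξ / d := by
        simp only [adaptP]
        rw [hvcn, ← hRdef, ← hrdef, max_eq_left hpos.le, div_div_eq_mul_div, ← hddef]
      have hcoef : max (h v ξ) 0 / adaptP (fun u => h u ξ) (L ξ) v = d / L ξ := by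
        rw [max_eq_left hpos.le, hadapt, div_div_eq_mul_div, mul_div_mul_left _ _ hpos.ne']
      have hRLp : R * (L ξ) ^ 2 = ‖G‖ ^ 2 - 2 * h v ξ * L ξ := by
        rw [hRval]; field_simp
      have hdG2 : d * ‖G‖ ^ 2 = ‖G‖ ^ 2 - r * L ξ * ‖G‖ := by
        rw [hddef]; field_simp
      have h6 : (r * L ξ) ^ 2 = ‖G‖ ^ 2 - 2 * h v ξ * L ξ ∨ (R ≤ 0 ∧ r = 0) := by
        rcases le_or_gt R 0 with hR0 | hR0
        · exact Or.inr ⟨hR0, by rw [hrdef, max_eq_right hR0, Real.sqrt_zero]⟩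
        · left
          have hrsq : r ^ 2 = R := by
            rw [hrdef, max_eq_left hR0.le, Real.sq_sqrt hR0.le]
          rw [mul_pow, hrsq]
          nlinarith [hRLp]
      have hGB : ‖G‖ ^ 2 ≤ B2 := by
        have h1 := hgradbd ξ
        rw [← hGdef] at h1
        have h2 : ‖G‖ ^ 2 ≤ Bh ^ 2 := pow_le_pow_left₀ (norm_nonneg G) h1 2
        rw [hB2]; exact le_trans h2 (le_max_left _ _)
      have hkey1 : d * ‖G‖ ^ 2 ≤ 2 * h v ξ * L ξ := by
        rcases h6 with h6 | ⟨hR0, hr00⟩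
        · exact aux_key1 hdG2 h6 (mul_nonneg hr0 hLp.le) hrLp.le
        · have hd' : d = 1 := by rw [hddef, hr00]; simp
          rw [hd', one_mul]
          exact aux_R_nonpos hRLp hR0
      have hkey2 : h v ξ * L ξ ≤ d * B2 := by
        rcases h6 with h6 | ⟨hR0, hr00⟩
        · exact aux_key2 hdG2 h6 hdpos.le hGB
        · have hd' : d = 1 := by rw [hddef, hr00]; simp
          rw [hd', one_mul]
          have h1 : h v ξ ≤ Mh := le_trans (le_abs_self _) (hhbd ξ)
          have h2 : L ξ ≤ Lmax := hLmax ξ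
          have h3 : h v ξ * L ξ ≤ Mh * Lmax := mul_le_mul h1 h2 hLp.le hMh.le
          rw [hB2]
          exact le_trans h3 (le_max_right _ _)
      have hzg := hz ξ
      rw [← hGdef, hcoef] at hzg
      have hvsub : z ξ - xstar = (v - xstar) - (β * (d / L ξ)) • G := by
        rw [hzg]; abel
      have hnormz : ‖z ξ - xstar‖ ^ 2 = ‖v - xstar‖ ^ 2
          - 2 * (β * (d / L ξ)) * ⟪G, v - xstar⟫ + (β * (d / L ξ)) ^ 2 * ‖G‖ ^ 2 := by
        rw [hvsub, norm_sub_sq_real, real_inner_smul_right, norm_smul,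
          Real.norm_eq_abs, mul_pow, sq_abs, real_inner_comm (v - xstar) G]
        ring
      set τ := d / L ξ with hτdef
      have hτpos : 0 < τ := by rw [hτdef]; positivity
      have hτG : τ * ‖G‖ ^ 2 ≤ 2 * h v ξ := by
        rw [hτdef, div_mul_eq_mul_div, div_le_iff₀ hLp]
        linarith [hkey1]
      have hτH : h v ξ ^ 2 / B2 ≤ τ * h v ξ := by
        have h1 : h v ξ / B2 ≤ d / L ξ := by
          rw [div_le_div_iff₀ hB2pos hLp]; linarith [hkey2]
        calc h v ξ ^ 2 / B2 = h v ξ * (h v ξ / B2) := by ring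
          _ ≤ h v ξ * (d / L ξ) := mul_le_mul_of_nonneg_left h1 hpos.le
          _ = τ * h v ξ := by rw [hτdef]; ring
      have hzb : ‖z ξ - xstar‖ ^ 2
          ≤ ‖v - xstar‖ ^ 2 - 2 * β * (1 - β) / B2 * h v ξ ^ 2 := by
        rw [hnormz]
        exact aux_zb hβ0 hβ1 hτpos hB2pos hgi' hτG hτH
      have hfinal := pow_le_pow_left₀ (norm_nonneg _) hproj2 2
      rw [max_eq_left hpos.le]
      linarith [hzb, hfinal]
  -- integrability and integral bound
  have hcnn : (0:ℝ) ≤ 2 * β * (1 - β) / B2 := by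
    apply div_nonneg _ hB2pos.le
    linarith [mul_pos hβ0 hβ1']
  have hint1 : Integrable (fun ξ => (max (h v ξ) 0) ^ 2) P := by
    refine Integrable.mono' (integrable_const (Mh ^ 2)) hmeas1.aestronglyMeasurable ?_
    filter_upwards with ξ
    rw [Real.norm_eq_abs, abs_of_nonneg (by positivity)]
    have h1 : max (h v ξ) 0 ≤ Mh := max_le (le_trans (le_abs_self _) (hhbd ξ)) hMh.le
    exact pow_le_pow_left₀ (le_max_right _ _) h1 2
  have hint2 : Integrable (fun ξ => ‖xplus ξ - xstar‖ ^ 2) P := by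
    refine Integrable.mono' (integrable_const (‖v - xstar‖ ^ 2)) hmeas2.aestronglyMeasurable ?_
    filter_upwards with ξ
    rw [Real.norm_eq_abs, abs_of_nonneg (by positivity)]
    have h1 := hpoint ξ
    linarith [mul_nonneg hcnn (sq_nonneg (max (h v ξ) 0))]
  have hI : ∫ ξ, ‖xplus ξ - xstar‖ ^ 2 ∂P
      ≤ ‖v - xstar‖ ^ 2 - 2 * β * (1 - β) / B2 * ∫ ξ, (max (h v ξ) 0) ^ 2 ∂P := by
    have h1 : ∫ ξ, ‖xplus ξ - xstar‖ ^ 2 ∂P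
        ≤ ∫ ξ, (‖v - xstar‖ ^ 2 - 2 * β * (1 - β) / B2 * (max (h v ξ) 0) ^ 2) ∂P :=
      integral_mono hint2 ((integrable_const _).sub (hint1.const_mul _)) hpoint
    rwa [integral_sub (integrable_const _) (hint1.const_mul _), integral_const,
      integral_const_mul, probReal_univ, one_smul] at h1
  set Ev := infDist v X with hEvdef
  have hEv0 : 0 ≤ Ev := infDist_nonneg
  have hJ : 2 * κ * Ev ^ 2 ≤ 2 * β * (1 - β) / B2 * ∫ ξ, (max (h v ξ) 0) ^ 2 ∂P := by
    have hkc : κ * c = β * (1 - β) / B2 := by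
      rw [hκdef]; field_simp
    have h2 := mul_le_mul_of_nonneg_left (hreg v hvY) (by linarith : (0:ℝ) ≤ 2 * κ)
    have h3 : 2 * κ * (c * ∫ ξ, (max (h v ξ) 0) ^ 2 ∂P)
        = 2 * β * (1 - β) / B2 * ∫ ξ, (max (h v ξ) 0) ^ 2 ∂P := by
      rw [hκdef]; field_simp
    linarith [h2, h3.le, h3.ge]
  have hIE : ∫ ξ, ‖xplus ξ - xstar‖ ^ 2 ∂P ≤ ‖v - xstar‖ ^ 2 - 2 * κ * Ev ^ 2 := by
    linarith [hI, hJ]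
  -- distances
  have hDx : D = ‖x - w‖ := by
    haveI : Nonempty ↥X := hXne.to_subtype
    apply le_antisymm
    · simpa [hDdef, dist_eq_norm] using infDist_le_dist_of_mem hwmem
    · rw [hDdef, infDist_eq_iInf]
      exact le_ciInf fun y => by simpa [dist_eq_norm] using hwproj y y.2
  have hxv : ‖x - v‖ ≤ α * Bf := by
    have h1 : ‖v - x‖ ≤ ‖(x - α • g) - x‖ :=
      proj_nonexpansive hYcv hvY hx hvproj
    have h2 : ‖(x - α • g) - x‖ = α * ‖g‖ := by
      have : (x - α • g) - x = -(α • g) := by abel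
      rw [this, norm_neg, norm_smul, Real.norm_eq_abs, abs_of_nonneg hα]
    rw [norm_sub_rev]
    calc ‖v - x‖ ≤ α * ‖g‖ := h2 ▸ h1
      _ ≤ α * Bf := mul_le_mul_of_nonneg_left hg hα
  have hEvD : D - α * Bf ≤ Ev := by
    have h1 : D ≤ Ev + dist x v := infDist_le_infDist_add_dist
    rw [dist_eq_norm] at h1
    linarith [hxv]
  have hEvsq : D ^ 2 / 2 - (α * Bf) ^ 2 ≤ Ev ^ 2 :=
    aux_Ev hD0 (mul_nonneg hα hBf0) hEv0 hEvD
  -- optimality step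
  have hvxs : ‖v - xstar‖ ≤ ‖(x - α • g) - xstar‖ :=
    proj_nonexpansive hYcv hvY hxstarY hvproj
  have hexp : ‖(x - α • g) - xstar‖ ^ 2
      = ‖x - xstar‖ ^ 2 - 2 * α * ⟪g, x - xstar⟫ + α ^ 2 * ‖g‖ ^ 2 := by
    have he : (x - α • g) - xstar = (x - xstar) - α • g := by abel
    rw [he, norm_sub_sq_real, real_inner_smul_right, norm_smul,
      Real.norm_eq_abs, mul_pow, sq_abs, real_inner_comm (x - xstar) g]
    ring
  have hsc := hsg xstar hxstarY
  have hinnerg : f x - f xstar + μ / 2 * ‖x - xstar‖ ^ 2 ≤ ⟪g, x - xstar⟫ := by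
    have h1 : ⟪g, xstar - x⟫ = -⟪g, x - xstar⟫ := by rw [← inner_neg_right, neg_sub]
    have h2 : ‖xstar - x‖ = ‖x - xstar‖ := norm_sub_rev _ _
    rw [h1, h2] at hsc
    linarith
  have hfw : f xstar - f w ≤ -(μ / 2) * ‖w - xstar‖ ^ 2 := by
    have := hQG w hwmem; linarith
  have hfx : f w - f x ≤ Bbarf * D := by
    have h1 := hsgbar x hx
    have h2 : ⟪gbar, w - x⟫ ≤ ‖gbar‖ * ‖w - x‖ := real_inner_le_norm _ _
    have h3 : ⟪gbar, x - w⟫ = -⟪gbar, w - x⟫ := by rw [← inner_neg_right, neg_sub]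
    have h4 : ‖w - x‖ = D := by rw [hDx, norm_sub_rev]
    have h5 : ‖gbar‖ * ‖w - x‖ ≤ Bbarf * D := by
      rw [h4]; exact mul_le_mul_of_nonneg_right hgbar hD0
    rw [h3] at h1
    linarith [h2, h5]
  have hV : ‖v - xstar‖ ^ 2 ≤ (1 - μ * α) * ‖x - xstar‖ ^ 2 - μ * α * ‖w - xstar‖ ^ 2
      + 2 * α * Bbarf * D + α ^ 2 * Bf ^ 2 := by
    have h1 := pow_le_pow_left₀ (norm_nonneg _) hvxs 2
    have h2 : α ^ 2 * ‖g‖ ^ 2 ≤ α ^ 2 * Bf ^ 2 :=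
      mul_le_mul_of_nonneg_left (pow_le_pow_left₀ (norm_nonneg g) hg 2) (sq_nonneg α)
    have h3 := mul_le_mul_of_nonneg_left hinnerg (by linarith : (0:ℝ) ≤ 2 * α)
    have hfxs : μ / 2 * ‖w - xstar‖ ^ 2 - Bbarf * D ≤ f x - f xstar := by
      linarith [hfw, hfx]
    have h4 := mul_le_mul_of_nonneg_left hfxs (by linarith : (0:ℝ) ≤ 2 * α)
    linarith [h1, hexp, h2, h3, h4]
  have hY1 : 2 * α * Bbarf * D ≤ 2 / κ * Bbarf ^ 2 * α ^ 2 + κ / 2 * D ^ 2 := by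
    have hκne : κ ≠ 0 := ne_of_gt hκpos
    have h1 : κ * (2 * α * Bbarf * D) ≤ κ * (2 / κ * Bbarf ^ 2 * α ^ 2 + κ / 2 * D ^ 2) := by
      have h2 : κ * (2 / κ * Bbarf ^ 2 * α ^ 2) = 2 * Bbarf ^ 2 * α ^ 2 := by
        field_simp
      linarith [h2, sq_nonneg (κ * D - 2 * Bbarf * α)]
    exact le_of_mul_le_mul_left h1 hκpos
  have hB' : 2 * κ * (D ^ 2 / 2 - (α * Bf) ^ 2) ≤ 2 * κ * Ev ^ 2 :=
    mul_le_mul_of_nonneg_left hEvsq (by linarith)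
  have hChat2 : Chat = 2 / κ * Bbarf ^ 2 + (1 + 2 * κ) * Bf ^ 2 := by
    rw [hChat, hκdef]
    have hβne : β * (1 - β) ≠ 0 := by positivity
    field_simp
  have hgoalc : β * (1 - β) / (2 * c * B2) = κ / 2 := by
    rw [hκdef]; field_simp
  rw [hgoalc, hChat2]
  linarith [hIE, hB', hV, hY1]
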